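/- Let n, m be natural numbers, 0 ≤ h ≤ m, and let P(u) = Σ_{i=0}^{n} pᵢ Bⁿᵢ(u) with real coefficients pᵢ. Then ∫₀¹ P(u) Bᵐ_h(u) du = (n+m+1)^{-1} C(m,h) Σ_{i=0}^{n} C(n,i) C(n+m,i+h)^{-1} pᵢ. -/

import Mathlib

open Finset intervalIntegral

lemma beta_nat (a b : ℕ) : ∫ u in (0:ℝ)..1, u ^ a * (1 - u) ^ b
    = (a.factorial : ℝ) * b.factorial / (a + b + 1).factorial := by
  have ha : 0 < Complex.re (a + 1 : ℂ) := by simp; positivity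
  have hb : 0 < Complex.re (b + 1 : ℂ) := by simp; positivity
  have key := Complex.Gamma_mul_Gamma_eq_betaIntegral ha hb
  rw [Complex.betaIntegral] at key
  have h1 : ∀ x : ℝ, (x:ℂ) ^ ((a:ℂ) + 1 - 1) * (1 - (x:ℂ)) ^ ((b:ℂ) + 1 - 1)
      = ((x ^ a * (1 - x) ^ b : ℝ) : ℂ) := by
    intro x
    push_cast
    rw [add_sub_cancel_right, add_sub_cancel_right, Complex.cpow_natCast, Complex.cpow_natCast]
  simp only [h1, intervalIntegral.integral_ofReal] at key
  have h4 : (a:ℂ) + 1 + ((b:ℂ) + 1) = ((a+b+1 : ℕ):ℂ) + 1 := by push_cast; ring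
  rw [h4, Complex.Gamma_nat_eq_factorial, Complex.Gamma_nat_eq_factorial,
    Complex.Gamma_nat_eq_factorial] at key
  have h5 : (((a+b+1).factorial : ℂ)) ≠ 0 := by exact_mod_cast (a+b+1).factorial_ne_zero
  field_simp at key ⊢
  have key2 : (a+b+1).factorial * (∫ (x : ℝ) in (0:ℝ)..1, x ^ a * (1 - x) ^ b) = (a.factorial * b.factorial : ℕ) := by exact_mod_cast key.symm
  push_cast at key2 ⊢
  linear_combination key2

/-- The Bernstein basis polynomial `B^n_j(u) = C(n,j) u^j (1-u)^(n-j)`. -/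
noncomputable def bern (n j : ℕ) (u : ℝ) : ℝ := (n.choose j : ℝ) * u ^ j * (1 - u) ^ (n - j)

theorem integral_bezier_mul_bernstein (n m h : ℕ) (hh : h ≤ m) (p : ℕ → ℝ) :
    ∫ u in (0:ℝ)..1, (∑ i ∈ range (n + 1), p i * bern n i u) * bern m h u
      = ((n + m + 1 : ℕ) : ℝ)⁻¹ * (m.choose h : ℝ) *
          ∑ i ∈ range (n + 1), (n.choose i : ℝ) * (((n + m).choose (i + h) : ℝ))⁻¹ * p i := by
  have heq : ∀ u : ℝ, (∑ i ∈ range (n + 1), p i * bern n i u) * bern m h u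
      = ∑ i ∈ range (n + 1), p i * bern n i u * bern m h u := fun u => Finset.sum_mul ..
  simp only [heq]
  rw [intervalIntegral.integral_finset_sum (fun i _ => by
    apply Continuous.intervalIntegrable
    unfold bern
    fun_prop)]
  rw [mul_sum]
  refine Finset.sum_congr rfl fun i hi => ?_
  have hin : i ≤ n := Nat.lt_succ_iff.mp (Finset.mem_range.mp hi)
  have hterm : ∀ u : ℝ, p i * bern n i u * bern m h u
      = (p i * (n.choose i : ℝ) * (m.choose h : ℝ)) * (u ^ (i + h) * (1 - u) ^ ((n + m) - (i + h))) := by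
    intro u
    unfold bern
    have e : (n + m) - (i + h) = (n - i) + (m - h) := by omega
    rw [e, pow_add, pow_add]
    ring
  simp only [hterm]
  rw [intervalIntegral.integral_const_mul, beta_nat]
  have hk : i + h ≤ n + m := by omega
  have e2 : (i + h) + ((n + m) - (i + h)) + 1 = n + m + 1 := by omega
  rw [e2]
  have hcf : ((n+m).choose (i+h)) * (i+h).factorial * ((n+m) - (i+h)).factorial
      = (n+m).factorial := Nat.choose_mul_factorial_mul_factorial hk
  have hcfR : (((n+m).choose (i+h)) : ℝ) * (i+h).factorial * ((n+m) - (i+h)).factorial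
      = ((n+m).factorial : ℝ) := by exact_mod_cast hcf
  have hfact : ((n+m+1).factorial : ℝ) = ((n+m+1 : ℕ) : ℝ) * ((n+m).factorial : ℝ) := by
    rw [Nat.factorial_succ]; push_cast; ring
  have hc0 : (((n+m).choose (i+h)) : ℝ) ≠ 0 := by
    exact_mod_cast (Nat.choose_pos hk).ne'
  have hf1 : ((i+h).factorial : ℝ) ≠ 0 := by exact_mod_cast (i+h).factorial_ne_zero
  have hf2 : (((n+m) - (i+h)).factorial : ℝ) ≠ 0 := by exact_mod_cast ((n+m) - (i+h)).factorial_ne_zero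
  have hf3 : ((n+m).factorial : ℝ) ≠ 0 := by exact_mod_cast (n+m).factorial_ne_zero
  have hn1 : ((n+m+1 : ℕ) : ℝ) ≠ 0 := by positivity
  field_simp
  push_cast [hfact] at hcfR ⊢
  linear_combination p i * (n.choose i : ℝ) * (m.choose h : ℝ) * ((n:ℝ) + (m:ℝ) + 1) * hcfR
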